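/- Let 0<β<1, 0≤λ<1, and a∈ℂ with |a|≤1. Then the function F_{a,λ}(z)=∫_0^z exp(∫_0^ξ 2(1-β)(aη+λ)/(1+λ(a-1)η-aη²) dη) dξ is analytic on D and belongs to F(λ,β): it satisfies F_{a,λ}(0)=0, F_{a,λ}'(0)=1, F_{a,λ}''(0)=2λ(1-β), F_{a,λ}'(z)≠0 for all z∈D, and Re(1+z F_{a,λ}''(z)/F_{a,λ}'(z))>β for all z∈D. -/

import Mathlib

open Complex Set MeasureTheory

noncomputable section

/-- The open unit disk in the complex plane. -/
def unitDisk : Set ℂ := {z : ℂ | ‖z‖ < 1}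

/-- Integral of `g` along the segment from `0` to `z0`:
`∫_0^{z0} g(ξ) dξ = ∫_0^1 z0 · g(t z0) dt`. -/
def segInt (g : ℂ → ℂ) (z0 : ℂ) : ℂ :=
  ∫ t in (0:ℝ)..1, z0 * g ((t : ℂ) * z0)

/-- The branch of `log f'` vanishing at the origin, evaluated at `z0`:
`log f'(z0) = ∫_0^{z0} f''(ξ)/f'(ξ) dξ`. -/
def logDerivAt (f : ℂ → ℂ) (z0 : ℂ) : ℂ :=
  segInt (fun ξ => deriv (deriv f) ξ / deriv f ξ) z0

/-- The class `F(λ,β)`: analytic `f` on the unit disk with `f(0)=0`, `f'(0)=1`,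
`f''(0)=2λ(1-β)`, nonvanishing derivative, and `Re(1 + z f''(z)/f'(z)) > β`. -/
def IsInF (lam beta : ℝ) (f : ℂ → ℂ) : Prop :=
  DifferentiableOn ℂ f unitDisk ∧ f 0 = 0 ∧ deriv f 0 = 1 ∧
    deriv (deriv f) 0 = 2 * (lam : ℂ) * (1 - (beta : ℂ)) ∧
    (∀ z ∈ unitDisk, deriv f z ≠ 0) ∧
    (∀ z ∈ unitDisk, beta < (1 + z * deriv (deriv f) z / deriv f z).re)

/-- The region of variability `V(z0,λ,β) = {log f'(z0) : f ∈ F(λ,β)}`. -/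
def V (z0 : ℂ) (lam beta : ℝ) : Set ℂ :=
  {w : ℂ | ∃ f : ℂ → ℂ, IsInF lam beta f ∧ logDerivAt f z0 = w}

/-- `log F'_{a,λ}(z0) = ∫_0^{z0} 2(1-β)(aξ+λ)/(1+λ(a-1)ξ-aξ²) dξ`. -/
def logFext (a : ℂ) (lam beta : ℝ) (z0 : ℂ) : ℂ :=
  segInt (fun ξ => 2 * (1 - (beta : ℂ)) * (a * ξ + (lam : ℂ)) /
    (1 + (lam : ℂ) * (a - 1) * ξ - a * ξ ^ 2)) z0

/-- The extremal function `F_{a,λ}(z) = ∫_0^z exp(log F'_{a,λ}(ξ)) dξ`. -/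
def Fext (a : ℂ) (lam beta : ℝ) (z : ℂ) : ℂ :=
  segInt (fun ξ => Complex.exp (logFext a lam beta ξ)) z

lemma unitDisk_eq : unitDisk = Metric.ball (0:ℂ) 1 := by
  ext z; simp [unitDisk, Metric.mem_ball, Complex.dist_eq]

lemma isOpen_unitDisk : IsOpen unitDisk := by
  rw [unitDisk_eq]; exact Metric.isOpen_ball

lemma hasDerivAt_segInt {g : ℂ → ℂ} (hg : DifferentiableOn ℂ g unitDisk)
    {z₀ : ℂ} (hz : z₀ ∈ unitDisk) : HasDerivAt (segInt g) (g z₀) z₀ := by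
  have hO : IsOpen unitDisk := isOpen_unitDisk
  have hga : AnalyticOnNhd ℂ g unitDisk := hg.analyticOnNhd hO
  have hg' : DifferentiableOn ℂ (deriv g) unitDisk := hga.deriv.differentiableOn
  have hcg : ContinuousOn g unitDisk := hg.continuousOn
  have hcg' : ContinuousOn (deriv g) unitDisk := hg'.continuousOn
  have hz1 : ‖z₀‖ < 1 := hz
  set r : ℝ := (1 + ‖z₀‖) / 2 with hr
  have hz₀r : ‖z₀‖ < r := by rw [hr]; linarith
  have hr1 : r < 1 := by rw [hr]; linarith [norm_nonneg z₀]
  have hr0 : 0 < r := lt_of_le_of_lt (norm_nonneg z₀) hz₀r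
  have hK : Metric.closedBall (0:ℂ) r ⊆ unitDisk := by
    intro x hx
    simp only [Metric.mem_closedBall, Complex.dist_eq, sub_zero] at hx
    exact lt_of_le_of_lt hx hr1
  have hKc : IsCompact (Metric.closedBall (0:ℂ) r) := isCompact_closedBall _ _
  obtain ⟨C, hC⟩ := hKc.exists_bound_of_continuousOn (hcg.mono hK)
  obtain ⟨C', hC'⟩ := hKc.exists_bound_of_continuousOn (hcg'.mono hK)
  set ε : ℝ := r - ‖z₀‖ with hε
  have ε_pos : 0 < ε := by rw [hε]; linarith
  -- membership facts
  have hmem : ∀ x : ℂ, ‖x‖ ≤ r → ∀ t : ℝ, t ∈ Set.Icc (0:ℝ) 1 →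
      ((t:ℂ) * x) ∈ Metric.closedBall (0:ℂ) r := by
    intro x hx t ht
    simp only [Metric.mem_closedBall, Complex.dist_eq, sub_zero, norm_mul]
    have : ‖(t:ℂ)‖ = |t| := (Complex.norm_real t).trans (Real.norm_eq_abs t)
    rw [this, _root_.abs_of_nonneg ht.1]
    calc t * ‖x‖ ≤ 1 * r := by
          apply mul_le_mul ht.2 hx (norm_nonneg x) zero_le_one
      _ = r := one_mul r
  have hball : ∀ x : ℂ, x ∈ Metric.ball z₀ ε → ‖x‖ ≤ r := by
    intro x hx
    rw [Metric.mem_ball, Complex.dist_eq] at hx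
    calc ‖x‖ = ‖(x - z₀) + z₀‖ := by ring_nf
      _ ≤ ‖x - z₀‖ + ‖z₀‖ := norm_add_le _ _
      _ ≤ r := by rw [hε] at hx; linarith
  have hsub : Set.uIoc (0:ℝ) 1 ⊆ Set.Icc (0:ℝ) 1 := by
    rw [Set.uIoc_of_le (zero_le_one)]; exact Set.Ioc_subset_Icc_self
  -- continuity of t ↦ x * g (t x)
  have hmaps : ∀ x : ℂ, ‖x‖ ≤ r →
      Set.MapsTo (fun t : ℝ => (t:ℂ) * x) (Set.Icc 0 1) unitDisk := by
    intro x hx t ht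
    exact hK (hmem x hx t ht)
  have hcont : ∀ x : ℂ, ‖x‖ ≤ r →
      ContinuousOn (fun t : ℝ => x * g ((t:ℂ) * x)) (Set.Icc 0 1) := by
    intro x hx
    apply ContinuousOn.mul continuousOn_const
    exact hcg.comp ((Complex.continuous_ofReal.mul continuous_const).continuousOn) (hmaps x hx)
  have hcont' : ContinuousOn
      (fun t : ℝ => 1 * g ((t:ℂ) * z₀) + z₀ * (deriv g ((t:ℂ) * z₀) * (t:ℂ))) (Set.Icc 0 1) := by
    have h1 : ContinuousOn (fun t : ℝ => (t:ℂ) * z₀) (Set.Icc 0 1) :=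
      (Complex.continuous_ofReal.mul continuous_const).continuousOn
    apply ContinuousOn.add
    · exact continuousOn_const.mul (hcg.comp h1 (hmaps z₀ hz₀r.le))
    · exact continuousOn_const.mul
        ((hcg'.comp h1 (hmaps z₀ hz₀r.le)).mul Complex.continuous_ofReal.continuousOn)
  have key := intervalIntegral.hasDerivAt_integral_of_dominated_loc_of_deriv_le
    (F := fun (x : ℂ) (t : ℝ) => x * g ((t:ℂ) * x))
    (F' := fun (x : ℂ) (t : ℝ) => 1 * g ((t:ℂ) * x) + x * (deriv g ((t:ℂ) * x) * (t:ℂ)))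
    (x₀ := z₀) (a := 0) (b := 1) (bound := fun _ => C + C') (μ := volume) (Metric.ball_mem_nhds z₀ ε_pos)
    ?_ ?_ ?_ ?_ ?_ ?_
  · -- conclusion
    have h2 := key.2
    have hFTC : (∫ t in (0:ℝ)..1,
        (1 * g ((t:ℂ) * z₀) + z₀ * (deriv g ((t:ℂ) * z₀) * (t:ℂ)))) = g z₀ := by
      have hd : ∀ t ∈ Set.uIcc (0:ℝ) 1, HasDerivAt (fun t : ℝ => (t:ℂ) * g ((t:ℂ) * z₀))
          (1 * g ((t:ℂ) * z₀) + z₀ * (deriv g ((t:ℂ) * z₀) * (t:ℂ))) t := by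
        intro t ht
        rw [Set.uIcc_of_le zero_le_one] at ht
        have htz : ((t:ℂ) * z₀) ∈ unitDisk := hK (hmem z₀ hz₀r.le t ht)
        have hg1 : HasDerivAt g (deriv g ((t:ℂ) * z₀)) ((t:ℂ) * z₀) :=
          (hg.differentiableAt (hO.mem_nhds htz)).hasDerivAt
        have hinner : HasDerivAt (fun w : ℂ => g (w * z₀))
            (deriv g ((t:ℂ) * z₀) * z₀) (t:ℂ) :=
          HasDerivAt.comp _ hg1 (hasDerivAt_mul_const z₀)
        have hprod : HasDerivAt (fun w : ℂ => w * g (w * z₀))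
            (1 * g ((t:ℂ) * z₀) + (t:ℂ) * (deriv g ((t:ℂ) * z₀) * z₀)) (t:ℂ) :=
          (hasDerivAt_id _).mul hinner
        have := hprod.comp_ofReal
        convert this using 1
        ring
      have hint : IntervalIntegrable
          (fun t : ℝ => 1 * g ((t:ℂ) * z₀) + z₀ * (deriv g ((t:ℂ) * z₀) * (t:ℂ)))
          volume 0 1 := by
        apply ContinuousOn.intervalIntegrable
        rwa [Set.uIcc_of_le zero_le_one]
      rw [intervalIntegral.integral_eq_sub_of_hasDerivAt hd hint]
      push_cast
      simp
    rw [hFTC] at h2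
    exact h2
  · -- hF_meas
    filter_upwards [Metric.ball_mem_nhds z₀ ε_pos] with x hx
    exact ((hcont x (hball x hx)).mono hsub).aestronglyMeasurable measurableSet_uIoc
  · -- hF_int
    apply ContinuousOn.intervalIntegrable
    rw [Set.uIcc_of_le zero_le_one]
    exact hcont z₀ hz₀r.le
  · -- hF'_meas
    exact ((hcont'.mono hsub).aestronglyMeasurable measurableSet_uIoc)
  · -- h_bound
    apply Filter.Eventually.of_forall
    intro t ht x hx
    have htIcc : t ∈ Set.Icc (0:ℝ) 1 := hsub ht
    have hxr : ‖x‖ ≤ r := hball x hx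
    have htx : ((t:ℂ) * x) ∈ Metric.closedBall (0:ℂ) r := hmem x hxr t htIcc
    have h1 : ‖g ((t:ℂ) * x)‖ ≤ C := hC _ htx
    have h2 : ‖deriv g ((t:ℂ) * x)‖ ≤ C' := hC' _ htx
    have hC'0 : 0 ≤ C' := le_trans (norm_nonneg _) h2
    calc ‖1 * g ((t:ℂ) * x) + x * (deriv g ((t:ℂ) * x) * (t:ℂ))‖
        ≤ ‖1 * g ((t:ℂ) * x)‖ + ‖x * (deriv g ((t:ℂ) * x) * (t:ℂ))‖ := norm_add_le _ _
      _ ≤ C + C' := by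
          apply add_le_add
          · rwa [one_mul]
          · rw [norm_mul, norm_mul]
            have hxle : ‖x‖ ≤ 1 := le_trans hxr hr1.le
            have htle : ‖(t:ℂ)‖ ≤ 1 := by
              rw [Complex.norm_real, Real.norm_eq_abs, _root_.abs_of_nonneg htIcc.1]
              exact htIcc.2
            calc ‖x‖ * (‖deriv g ((t:ℂ) * x)‖ * ‖(t:ℂ)‖) ≤ 1 * (C' * 1) := by
                  apply mul_le_mul hxle _ (by positivity) zero_le_one
                  exact mul_le_mul h2 htle (norm_nonneg _) hC'0
              _ = C' := by ring
  · exact intervalIntegrable_const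
  · -- h_diff
    apply Filter.Eventually.of_forall
    intro t ht x hx
    have htIcc : t ∈ Set.Icc (0:ℝ) 1 := hsub ht
    have htx : ((t:ℂ) * x) ∈ unitDisk := hK (hmem x (hball x hx) t htIcc)
    have hg1 : HasDerivAt g (deriv g ((t:ℂ) * x)) ((t:ℂ) * x) :=
      (hg.differentiableAt (hO.mem_nhds htx)).hasDerivAt
    have hmul : HasDerivAt (fun y : ℂ => (t:ℂ) * y) (t:ℂ) x := by
      simpa using (hasDerivAt_id x).const_mul (t:ℂ)
    have hinner : HasDerivAt (fun y : ℂ => g ((t:ℂ) * y)) (deriv g ((t:ℂ) * x) * (t:ℂ)) x :=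
      HasDerivAt.comp _ hg1 hmul
    exact (hasDerivAt_id x).mul hinner

lemma abs_lin_le {lam : ℝ} (h0 : 0 ≤ lam) (h1 : lam ≤ 1) {u : ℂ} (hu : ‖u‖ ≤ 1) :
    ‖(lam:ℂ) + u‖ ≤ ‖1 + (lam:ℂ) * u‖ := by
  have hu2 : u.re ^ 2 + u.im ^ 2 ≤ 1 := by
    have h := Complex.sq_norm u
    rw [Complex.normSq_apply] at h
    nlinarith [norm_nonneg u]
  have h2 : Complex.normSq ((lam:ℂ) + u) ≤ Complex.normSq (1 + (lam:ℂ) * u) := by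
    simp only [Complex.normSq_apply, Complex.add_re, Complex.add_im, Complex.mul_re,
      Complex.mul_im, Complex.ofReal_re, Complex.ofReal_im, Complex.one_re, Complex.one_im]
    nlinarith [mul_nonneg (by nlinarith : (0:ℝ) ≤ 1 - lam ^ 2)
      (by linarith : (0:ℝ) ≤ 1 - u.re ^ 2 - u.im ^ 2)]
  rw [Complex.norm_def, Complex.norm_def]
  exact Real.sqrt_le_sqrt h2

lemma key_ineq {lam : ℝ} (h0 : 0 ≤ lam) (h1 : lam ≤ 1) {a z : ℂ}
    (ha : ‖a‖ ≤ 1) (hz : ‖z‖ < 1) :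
    ‖z * ((lam:ℂ) + a * z)‖ < ‖1 + (lam:ℂ) * (a * z)‖ := by
  have haz : ‖a * z‖ < 1 := by
    rw [norm_mul]
    calc ‖a‖ * ‖z‖ ≤ 1 * ‖z‖ :=
          mul_le_mul_of_nonneg_right ha (norm_nonneg z)
      _ = ‖z‖ := one_mul _
      _ < 1 := hz
  have hlin := abs_lin_le h0 h1 haz.le
  have hApos : 0 < ‖1 + (lam:ℂ) * (a * z)‖ := by
    have hlt : ‖(lam:ℂ) * (a * z)‖ < 1 := by
      rw [norm_mul, Complex.norm_real, Real.norm_eq_abs, _root_.abs_of_nonneg h0]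
      calc lam * ‖a * z‖ ≤ 1 * ‖a * z‖ :=
            mul_le_mul_of_nonneg_right h1 (norm_nonneg _)
        _ = ‖a * z‖ := one_mul _
        _ < 1 := haz
    by_contra h
    push_neg at h
    have h0' : ‖1 + (lam:ℂ) * (a * z)‖ = 0 := le_antisymm h (norm_nonneg _)
    have : (1 : ℂ) + (lam:ℂ) * (a * z) = 0 := by
      exact norm_eq_zero.mp h0'
    have h1' : (lam:ℂ) * (a * z) = -1 := by linear_combination this
    rw [h1'] at hlt
    simp at hlt
  calc ‖z * ((lam:ℂ) + a * z)‖
      = ‖z‖ * ‖(lam:ℂ) + a * z‖ := norm_mul _ _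
    _ ≤ ‖z‖ * ‖1 + (lam:ℂ) * (a * z)‖ :=
        mul_le_mul_of_nonneg_left hlin (norm_nonneg z)
    _ < 1 * ‖1 + (lam:ℂ) * (a * z)‖ := by
        exact mul_lt_mul_of_pos_right hz hApos
    _ = ‖1 + (lam:ℂ) * (a * z)‖ := one_mul _


/-- for `0 < β < 1`, `0 ≤ λ < 1` and `|a| ≤ 1`, the extremal function
`F_{a,λ}` is analytic on `D` and belongs to `F(λ,β)`. -/
theorem Fext_mem_F (beta lam : ℝ) (hbeta : 0 < beta ∧ beta < 1)
    (hlam : 0 ≤ lam ∧ lam < 1) (a : ℂ) (ha : ‖a‖ ≤ 1) :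
    DifferentiableOn ℂ (Fext a lam beta) unitDisk ∧ IsInF lam beta (Fext a lam beta) := by
  obtain ⟨hb0, hb1⟩ := hbeta
  obtain ⟨hl0, hl1⟩ := hlam
  have hO : IsOpen unitDisk := isOpen_unitDisk
  set g : ℂ → ℂ := fun ξ => 2 * (1 - (beta : ℂ)) * (a * ξ + (lam : ℂ)) /
    (1 + (lam : ℂ) * (a - 1) * ξ - a * ξ ^ 2) with hgdef
  have hden : ∀ z ∈ unitDisk, (1 + (lam : ℂ) * (a - 1) * z - a * z ^ 2) ≠ 0 := by
    intro z hz hne0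
    have hzlt : ‖z‖ < 1 := hz
    have hk := key_ineq hl0 hl1.le ha hzlt
    have heq : (1 + (lam:ℂ) * (a * z)) = z * ((lam:ℂ) + a * z) := by
      linear_combination hne0
    rw [heq] at hk
    exact lt_irrefl _ hk
  have hgdiff : DifferentiableOn ℂ g unitDisk := by
    apply DifferentiableOn.div
    · fun_prop
    · fun_prop
    · exact hden
  have hL : ∀ z ∈ unitDisk, HasDerivAt (logFext a lam beta) (g z) z := fun z hz =>
    hasDerivAt_segInt hgdiff hz
  have hLd : DifferentiableOn ℂ (logFext a lam beta) unitDisk := fun z hz =>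
    ((hL z hz).differentiableAt).differentiableWithinAt
  have hEd : DifferentiableOn ℂ (fun ξ => Complex.exp (logFext a lam beta ξ)) unitDisk :=
    hLd.cexp
  have hF : ∀ z ∈ unitDisk,
      HasDerivAt (Fext a lam beta) (Complex.exp (logFext a lam beta z)) z :=
    fun z hz => hasDerivAt_segInt hEd hz
  have hFd : DifferentiableOn ℂ (Fext a lam beta) unitDisk := fun z hz =>
    ((hF z hz).differentiableAt).differentiableWithinAt
  have hd1 : ∀ z ∈ unitDisk, deriv (Fext a lam beta) z = Complex.exp (logFext a lam beta z) :=
    fun z hz => (hF z hz).deriv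
  have hd2 : ∀ z ∈ unitDisk, deriv (deriv (Fext a lam beta)) z =
      Complex.exp (logFext a lam beta z) * g z := by
    intro z hz
    have hev : deriv (Fext a lam beta) =ᶠ[nhds z]
        fun ξ => Complex.exp (logFext a lam beta ξ) :=
      Filter.eventuallyEq_of_mem (hO.mem_nhds hz) (fun x hx => hd1 x hx)
    rw [hev.deriv_eq]
    exact ((hL z hz).cexp).deriv
  have h0mem : (0:ℂ) ∈ unitDisk := by
    show ‖(0:ℂ)‖ < 1
    simp
  have hlog0 : logFext a lam beta 0 = 0 := by
    simp [logFext, segInt]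
  have hg0 : g 0 = 2 * (lam:ℂ) * (1 - (beta:ℂ)) := by
    simp only [hgdef]
    norm_num
    ring
  refine ⟨hFd, hFd, ?_, ?_, ?_, ?_, ?_⟩
  · simp [Fext, segInt]
  · rw [hd1 0 h0mem, hlog0, Complex.exp_zero]
  · rw [hd2 0 h0mem, hlog0, Complex.exp_zero, one_mul, hg0]
  · intro z hz
    rw [hd1 z hz]
    exact Complex.exp_ne_zero _
  · intro z hz
    have hE := Complex.exp_ne_zero (logFext a lam beta z)
    have hq : 1 + z * deriv (deriv (Fext a lam beta)) z / deriv (Fext a lam beta) z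
        = 1 + z * g z := by
      rw [hd1 z hz, hd2 z hz, mul_comm (Complex.exp _) (g z), ← mul_assoc,
        mul_div_assoc, div_self hE, mul_one]
    have hp : (1 + (lam : ℂ) * (a - 1) * z - a * z ^ 2) ≠ 0 := hden z hz
    have hABne : ((1 + (lam:ℂ) * (a * z)) - z * ((lam:ℂ) + a * z)) ≠ 0 := by
      intro h; apply hp; linear_combination h
    have hiden : 1 + z * g z = (beta:ℂ) +
        (1 - (beta:ℂ)) * (((1 + (lam:ℂ) * (a * z)) + z * ((lam:ℂ) + a * z)) /
          ((1 + (lam:ℂ) * (a * z)) - z * ((lam:ℂ) + a * z))) := by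
      simp only [hgdef]
      rw [show ((1 + (lam:ℂ) * (a * z)) - z * ((lam:ℂ) + a * z)) =
        (1 + (lam : ℂ) * (a - 1) * z - a * z ^ 2) by ring]
      rw [mul_div_assoc', mul_div_assoc', add_div' _ _ _ hp, add_div' _ _ _ hp, div_left_inj' hp]
      ring
    have hw : 0 < ((((1 + (lam:ℂ) * (a * z)) + z * ((lam:ℂ) + a * z)) /
        ((1 + (lam:ℂ) * (a * z)) - z * ((lam:ℂ) + a * z)))).re := by
      set A := 1 + (lam:ℂ) * (a * z) with hA
      set B := z * ((lam:ℂ) + a * z) with hB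
      rw [Complex.div_re, ← add_div]
      apply div_pos
      · have hnum2 : (A + B).re * (A - B).re + (A + B).im * (A - B).im
            = Complex.normSq A - Complex.normSq B := by
          simp only [Complex.normSq_apply, Complex.add_re, Complex.sub_re,
            Complex.add_im, Complex.sub_im]
          ring
        rw [hnum2]
        have hlt : Complex.normSq B < Complex.normSq A := by
          rw [← Complex.sq_norm, ← Complex.sq_norm]
          have hk := key_ineq hl0 hl1.le ha (show ‖z‖ < 1 from hz)
          exact pow_lt_pow_left₀ hk (norm_nonneg _) two_ne_zero
        linarith
      · exact Complex.normSq_pos.mpr hABne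
    rw [hq, hiden]
    rw [Complex.add_re, Complex.mul_re]
    simp only [Complex.ofReal_re, Complex.ofReal_im, Complex.sub_re, Complex.sub_im,
      Complex.one_re, Complex.one_im]
    nlinarith [mul_pos (show (0:ℝ) < 1 - beta by linarith) hw]
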